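/- Let G be a 2-connected graph, let x, y be nonadjacent vertices of G such that G − {x,y} has exactly 2 connected components, and suppose {x,y} is not an admissible 2-cut. Then at least one component of G − {x,y} is a single vertex. -/

import Mathlib

open SimpleGraph

/-- `G` is a 2-sum of `G₁` and `G₂` with joins `j₁, j₂`.  Here `zᵢ` is a vertex of
`Gᵢ` of degree two with distinct neighbors `xᵢ, yᵢ`; the graphs `Gᵢ - zᵢ` (with the
edge `xᵢyᵢ` removed if present) are glued into `G` along `x₁ = x₂ = j₁` and
`y₁ = y₂ = j₂`, and the edge `j₁j₂` is present in `G` iff `xᵢyᵢ ∈ E(Gᵢ)` for some `i`. -/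
def IsTwoSumOf {V V₁ V₂ : Type*} (G : SimpleGraph V) (G₁ : SimpleGraph V₁)
    (G₂ : SimpleGraph V₂) (j₁ j₂ : V) : Prop :=
  ∃ (z₁ x₁ y₁ : V₁) (z₂ x₂ y₂ : V₂) (f₁ : V₁ → V) (f₂ : V₂ → V),
    x₁ ≠ y₁ ∧ x₂ ≠ y₂ ∧
    (∀ u, G₁.Adj z₁ u ↔ u = x₁ ∨ u = y₁) ∧
    (∀ u, G₂.Adj z₂ u ↔ u = x₂ ∨ u = y₂) ∧
    Set.InjOn f₁ {v | v ≠ z₁} ∧ Set.InjOn f₂ {v | v ≠ z₂} ∧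
    f₁ x₁ = j₁ ∧ f₁ y₁ = j₂ ∧ f₂ x₂ = j₁ ∧ f₂ y₂ = j₂ ∧
    (∀ v : V, v ∈ f₁ '' {u | u ≠ z₁} ∪ f₂ '' {u | u ≠ z₂}) ∧
    (f₁ '' {u | u ≠ z₁}) ∩ (f₂ '' {u | u ≠ z₂}) = {j₁, j₂} ∧
    (∀ u v, u ≠ z₁ → v ≠ z₁ → s(u, v) ≠ s(x₁, y₁) →
      (G.Adj (f₁ u) (f₁ v) ↔ G₁.Adj u v)) ∧
    (∀ u v, u ≠ z₂ → v ≠ z₂ → s(u, v) ≠ s(x₂, y₂) →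
      (G.Adj (f₂ u) (f₂ v) ↔ G₂.Adj u v)) ∧
    (G.Adj j₁ j₂ ↔ (G₁.Adj x₁ y₁ ∨ G₂.Adj x₂ y₂)) ∧
    (∀ a b, G.Adj a b →
      (a ∈ f₁ '' {u | u ≠ z₁} ∧ b ∈ f₁ '' {u | u ≠ z₁}) ∨
      (a ∈ f₂ '' {u | u ≠ z₂} ∧ b ∈ f₂ '' {u | u ≠ z₂}))

/-- `{x, y}` is an admissible 2-cut of `G`: `G` can be expressed as a 2-sum of two
graphs, each having fewer edges than `G`, with `{x, y}` the set of joins. -/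
def AdmissibleTwoCut {V : Type*} (G : SimpleGraph V) (x y : V) : Prop :=
  ∃ (n₁ n₂ : ℕ) (G₁ : SimpleGraph (Fin n₁)) (G₂ : SimpleGraph (Fin n₂)),
    IsTwoSumOf G G₁ G₂ x y ∧
    G₁.edgeSet.ncard < G.edgeSet.ncard ∧ G₂.edgeSet.ncard < G.edgeSet.ncard

/-- `G` is 2-connected: at least 3 vertices, and deleting any single vertex
leaves a connected graph. -/
def TwoConnected {V : Type*} [Fintype V] (G : SimpleGraph V) : Prop :=
  3 ≤ Fintype.card V ∧ ∀ v : V, (G.induce {u | u ≠ v}).Connected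



lemma side {V : Type} [Fintype V] (G : SimpleGraph V) (x y : V) (hxy : x ≠ y)
    (hadj : ¬ G.Adj x y) (T : Set V) (hx : x ∈ T) (hy : y ∈ T) :
    ∃ (n : ℕ) (G₁ : SimpleGraph (Fin n)) (z xx yy : Fin n) (f : Fin n → V),
      xx ≠ yy ∧
      (∀ u, G₁.Adj z u ↔ u = xx ∨ u = yy) ∧
      Set.InjOn f {v | v ≠ z} ∧
      f xx = x ∧ f yy = y ∧
      f '' {u | u ≠ z} = T ∧
      (∀ u v, u ≠ z → v ≠ z → (G.Adj (f u) (f v) ↔ G₁.Adj u v)) ∧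
      ¬ G₁.Adj xx yy ∧
      G₁.edgeSet.ncard ≤ {e ∈ G.edgeSet | ∀ v ∈ e, v ∈ T}.ncard + 2 := by
  classical
  haveI : Fintype ↥T := Fintype.ofFinite _
  let G' : SimpleGraph (Option ↥T) :=
    { Adj := fun a b => match a, b with
        | some u, some v => G.Adj ↑u ↑v
        | some u, none => (u : V) = x ∨ (u : V) = y
        | none, some v => (v : V) = x ∨ (v : V) = y
        | none, none => False
      symm := ⟨by rintro (_ | u) (_ | v) h <;> first | exact h | exact h.symm⟩
      loopless := ⟨by rintro (_ | u) h <;> first | exact h | exact G.loopless.irrefl _ h⟩ }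
  have hG'ss : ∀ (a b : ↥T), G'.Adj (some a) (some b) ↔ G.Adj ↑a ↑b := fun _ _ => Iff.rfl
  have hG'ns : ∀ (b : ↥T), G'.Adj none (some b) ↔ ((b : V) = x ∨ (b : V) = y) := fun _ => Iff.rfl
  have hG'nn : ¬ G'.Adj none none := fun h => h
  let e := Fintype.equivFin (Option ↥T)
  let z := e none
  let f : Fin (Fintype.card (Option ↥T)) → V := fun i => (e.symm i).elim x Subtype.val
  have fval : ∀ (a : ↥T), f (e (some a)) = ↑a := fun a => by
    simp only [f, Equiv.symm_apply_apply, Option.elim]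
  have hfz : ∀ u, u ≠ z → ∃ a : ↥T, e (some a) = u := by
    intro u hu
    rcases hsu : e.symm u with _ | a
    · exact absurd (by rw [← e.apply_symm_apply u, hsu]) hu
    · exact ⟨a, by rw [← hsu, e.apply_symm_apply]⟩
  have hnez : ∀ a : ↥T, e (some a) ≠ z := by
    intro a h
    simpa using e.injective h
  refine ⟨Fintype.card (Option ↥T), SimpleGraph.comap (⇑e.symm) G', z,
    e (some ⟨x, hx⟩), e (some ⟨y, hy⟩), f,
    ?_, ?_, ?_, ?_, ?_, ?_, ?_, ?_, ?_⟩
  · intro h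
    have := e.injective h
    simp only [Option.some.injEq, Subtype.mk.injEq] at this
    exact hxy this
  · intro u
    obtain ⟨w, rfl⟩ : ∃ w, u = e w := ⟨e.symm u, (e.apply_symm_apply u).symm⟩
    have hred : (SimpleGraph.comap (⇑e.symm) G').Adj z (e w) ↔ G'.Adj none w := by
      simp only [comap_adj, Equiv.symm_apply_apply, z]
    rw [hred]
    simp only [Equiv.apply_eq_iff_eq]
    match w with
    | none => exact iff_of_false hG'nn (by simp)
    | some v => exact (hG'ns v).trans (by simp [Subtype.ext_iff])
  · -- InjOn
    intro u hu v hv h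
    obtain ⟨a, rfl⟩ := hfz u hu
    obtain ⟨b, rfl⟩ := hfz v hv
    rw [fval, fval] at h
    rw [Subtype.ext h]
  · exact fval ⟨x, hx⟩
  · exact fval ⟨y, hy⟩
  · -- image = T
    ext t
    constructor
    · rintro ⟨u, hu, rfl⟩
      obtain ⟨a, rfl⟩ := hfz u hu
      rw [fval]; exact a.2
    · intro ht
      exact ⟨e (some ⟨t, ht⟩), hnez _, fval _⟩
  · -- adjacency transfer
    intro u v hu hv
    obtain ⟨a, rfl⟩ := hfz u hu
    obtain ⟨b, rfl⟩ := hfz v hv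
    rw [fval, fval]
    simp only [comap_adj, Equiv.symm_apply_apply]
    exact (hG'ss a b).symm
  · -- not adj xx yy
    simp only [comap_adj, Equiv.symm_apply_apply]
    exact fun h => hadj h
  · -- edge bound
    set ET := {e ∈ G.edgeSet | ∀ v ∈ e, v ∈ T} with hET
    set G₁ := SimpleGraph.comap (⇑e.symm) G' with hG₁
    let j : Fin (Fintype.card (Option ↥T)) → Option V := fun i => Option.map Subtype.val (e.symm i)
    have hjinj : Function.Injective j :=
      (Option.map_injective Subtype.val_injective).comp e.symm.injective
    have himg : Sym2.map j '' G₁.edgeSet ⊆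
        (Sym2.map some '' ET) ∪ {s((none : Option V), some x), s((none : Option V), some y)} := by
      rintro _ ⟨ed, hed, rfl⟩
      induction ed using Sym2.ind with
      | _ u v =>
        rw [SimpleGraph.mem_edgeSet] at hed
        have hed' : G'.Adj (e.symm u) (e.symm v) := hed
        have hju : j u = Option.map Subtype.val (e.symm u) := rfl
        have hjv : j v = Option.map Subtype.val (e.symm v) := rfl
        rw [Sym2.map_pair_eq]
        match hsu : e.symm u, hsv : e.symm v with
        | some a, some b =>
          rw [hsu, hsv] at hed'
          left
          refine ⟨s((a : V), (b : V)), ⟨hed', ?_⟩, ?_⟩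
          · intro w hw
            rcases Sym2.mem_iff.mp hw with rfl | rfl
            · exact a.2
            · exact b.2
          · rw [hju, hjv, hsu, hsv, Sym2.map_pair_eq]
            rfl
        | some a, none =>
          rw [hsu, hsv] at hed'
          right
          rw [hju, hjv, hsu, hsv]
          simp only [Option.map_some, Option.map_none]
          rw [Sym2.eq_swap]
          rcases hed' with h | h <;> rw [h] <;> simp
        | none, some b =>
          rw [hsu, hsv] at hed'
          right
          rw [hju, hjv, hsu, hsv]
          simp only [Option.map_some, Option.map_none]
          rcases hed' with h | h <;> rw [h] <;> simp
        | none, none =>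
          rw [hsu, hsv] at hed'
          exact absurd hed' hG'nn
    calc G₁.edgeSet.ncard = (Sym2.map j '' G₁.edgeSet).ncard :=
          (Set.ncard_image_of_injective _ (Sym2.map.injective hjinj)).symm
      _ ≤ ((Sym2.map some '' ET) ∪
            {s((none : Option V), some x), s((none : Option V), some y)}).ncard :=
          Set.ncard_le_ncard himg (Set.toFinite _)
      _ ≤ (Sym2.map some '' ET).ncard +
            ({s((none : Option V), some x), s((none : Option V), some y)} : Set (Sym2 (Option V))).ncard :=
          Set.ncard_union_le _ _
      _ ≤ ET.ncard + 2 := by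
          refine add_le_add (le_of_eq (Set.ncard_image_of_injective _
            (Sym2.map.injective (Option.some_injective V)))) ?_
          exact le_trans (Set.ncard_insert_le _ _) (by simp)

lemma exists_adj_boundary {α : Type*} (Γ : SimpleGraph α) (K : Set α) {u v : α}
    (w : Γ.Walk u v) : u ∈ K → v ∉ K → ∃ p q, p ∈ K ∧ q ∉ K ∧ Γ.Adj p q := by
  induction w with
  | nil => exact fun hu hv => absurd hu hv
  | @cons a b c hab p ih =>
    intro hu hv
    by_cases hb : b ∈ K
    · exact ih hb hv
    · exact ⟨a, b, hu, hb, hab⟩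

lemma exists_nbr {V : Type} [Fintype V] (G : SimpleGraph V) (h2 : TwoConnected G)
    (x y : V) (hxy : x ≠ y) (A : Set V) (hA : A.Nonempty) (hxA : x ∉ A) (hyA : y ∉ A)
    (hcl : ∀ a ∈ A, ∀ b, G.Adj a b → b ∈ A ∨ b = x ∨ b = y) :
    ∃ a ∈ A, G.Adj x a := by
  obtain ⟨a₀, ha₀⟩ := hA
  have hx' : x ∈ {u : V | u ≠ y} := hxy
  have ha' : a₀ ∈ {u : V | u ≠ y} := fun h => hyA (h ▸ ha₀)
  obtain ⟨w⟩ := ((h2.2 y).preconnected ⟨a₀, ha'⟩ ⟨x, hx'⟩)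
  obtain ⟨p, q, hp, hq, hpq⟩ := exists_adj_boundary _ {w : {u : V | u ≠ y} | ↑w ∈ A}
    w (by exact ha₀) (by exact hxA)
  have hGpq : G.Adj ↑p ↑q := hpq
  rcases hcl ↑p hp ↑q hGpq with h | h | h
  · exact absurd h hq
  · exact ⟨↑p, hp, by rw [← h]; exact hGpq.symm⟩
  · exact absurd h q.2

/-- If `G` is 2-connected, `x, y` are nonadjacent, `G - {x,y}` has exactly 2
components, and `{x,y}` is not an admissible 2-cut, then at least one component
of `G - {x,y}` is a single vertex. -/
theorem single_vertex_component_of_not_admissible {V : Type} [Fintype V]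
    (G : SimpleGraph V) (x y : V) (hxy : x ≠ y) (hadj : ¬ G.Adj x y)
    (h2 : TwoConnected G)
    (hc : Nat.card ((G.induce {v : V | v ≠ x ∧ v ≠ y}).ConnectedComponent) = 2)
    (hna : ¬ AdmissibleTwoCut G x y) :
    ∃ c : (G.induce {v : V | v ≠ x ∧ v ≠ y}).ConnectedComponent,
      c.supp.ncard = 1 := by
  classical
  by_contra hcon
  push_neg at hcon
  apply hna
  set S : Set V := {v : V | v ≠ x ∧ v ≠ y} with hS
  set H : SimpleGraph ↥S := G.induce S with hH
  obtain ⟨c₁, c₂, hcc, hccuniv⟩ := Nat.card_eq_two_iff.mp hc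
  set A : Set V := Subtype.val '' c₁.supp with hA
  set B : Set V := Subtype.val '' c₂.supp with hB
  -- basic membership facts
  have hxA : x ∉ A := by rintro ⟨u, _, hu⟩; exact u.2.1 hu
  have hyA : y ∉ A := by rintro ⟨u, _, hu⟩; exact u.2.2 hu
  have hxB : x ∉ B := by rintro ⟨u, _, hu⟩; exact u.2.1 hu
  have hyB : y ∉ B := by rintro ⟨u, _, hu⟩; exact u.2.2 hu
  have hpart : ∀ v : V, v ∈ A ∨ v ∈ B ∨ v = x ∨ v = y := by
    intro v
    by_cases hvx : v = x
    · exact Or.inr (Or.inr (Or.inl hvx))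
    by_cases hvy : v = y
    · exact Or.inr (Or.inr (Or.inr hvy))
    have hv : v ∈ S := ⟨hvx, hvy⟩
    have hmem : H.connectedComponentMk ⟨v, hv⟩ ∈ ({c₁, c₂} : Set H.ConnectedComponent) := by
      rw [hccuniv]; trivial
    rcases hmem with h | h
    · exact Or.inl ⟨⟨v, hv⟩, h, rfl⟩
    · exact Or.inr (Or.inl ⟨⟨v, hv⟩, h, rfl⟩)
  have hABdisj : ∀ v, v ∈ A → v ∈ B → False := by
    rintro v ⟨u, hu, rfl⟩ ⟨w, hw, hw'⟩
    have : u = w := Subtype.ext hw'.symm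
    subst this
    rw [SimpleGraph.ConnectedComponent.mem_supp_iff] at hu hw
    exact hcc (hu ▸ hw ▸ rfl)
  have hABadj : ∀ a ∈ A, ∀ b ∈ B, ¬ G.Adj a b := by
    rintro _ ⟨a, ha, rfl⟩ _ ⟨b, hb, rfl⟩ hGab
    have hadj' : H.Adj a b := hGab
    rw [SimpleGraph.ConnectedComponent.mem_supp_iff] at ha hb
    exact hcc (by rw [← ha, ← hb, SimpleGraph.ConnectedComponent.sound hadj'.reachable])
  -- closure of A and B
  have hclA : ∀ a ∈ A, ∀ b, G.Adj a b → b ∈ A ∨ b = x ∨ b = y := by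
    rintro a ha b hab
    rcases hpart b with h | h | h | h
    · exact Or.inl h
    · exact absurd hab (hABadj a ha b h)
    · exact Or.inr (Or.inl h)
    · exact Or.inr (Or.inr h)
  have hclB : ∀ a ∈ B, ∀ b, G.Adj a b → b ∈ B ∨ b = x ∨ b = y := by
    rintro a ha b hab
    rcases hpart b with h | h | h | h
    · exact absurd hab.symm (hABadj b h a ha)
    · exact Or.inl h
    · exact Or.inr (Or.inl h)
    · exact Or.inr (Or.inr h)
  -- sizes
  have hsupp2 : ∀ c : H.ConnectedComponent, 2 ≤ c.supp.ncard := by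
    intro c
    obtain ⟨u, hu⟩ := c.exists_rep
    have hne : c.supp.Nonempty := ⟨u, hu⟩
    have h1 := (Set.ncard_pos (Set.toFinite _)).mpr hne
    have h2 := hcon c
    omega
  have hA2 : 2 ≤ A.ncard := by
    rw [hA, Set.ncard_image_of_injective _ Subtype.val_injective]; exact hsupp2 c₁
  have hB2 : 2 ≤ B.ncard := by
    rw [hB, Set.ncard_image_of_injective _ Subtype.val_injective]; exact hsupp2 c₂
  have hAne : A.Nonempty := by
    rcases Set.eq_empty_or_nonempty A with h | h
    · rw [h] at hA2; simp at hA2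
    · exact h
  have hBne : B.Nonempty := by
    rcases Set.eq_empty_or_nonempty B with h | h
    · rw [h] at hB2; simp at hB2
    · exact h
  -- neighbors of x and y in A and B
  have hxyS : ∀ u : V, u ∈ S ↔ (u ≠ x ∧ u ≠ y) := fun u => Iff.rfl
  have hnbxA : ∃ a ∈ A, G.Adj x a := exists_nbr G h2 x y hxy A hAne hxA hyA hclA
  have hnbxB : ∃ b ∈ B, G.Adj x b := exists_nbr G h2 x y hxy B hBne hxB hyB hclB
  have hclA' : ∀ a ∈ A, ∀ b, G.Adj a b → b ∈ A ∨ b = y ∨ b = x := by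
    intro a ha b hab; rcases hclA a ha b hab with h | h | h <;> tauto
  have hclB' : ∀ a ∈ B, ∀ b, G.Adj a b → b ∈ B ∨ b = y ∨ b = x := by
    intro a ha b hab; rcases hclB a ha b hab with h | h | h <;> tauto
  have hnbyA : ∃ a ∈ A, G.Adj y a := exists_nbr G h2 y x hxy.symm A hAne hyA hxA hclA'
  have hnbyB : ∃ b ∈ B, G.Adj y b := exists_nbr G h2 y x hxy.symm B hBne hyB hxB hclB'
  -- internal edges
  have hedge : ∀ (c : H.ConnectedComponent), 2 ≤ c.supp.ncard →
      ∃ a ∈ Subtype.val '' c.supp, ∃ b ∈ Subtype.val '' c.supp, G.Adj a b := by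
    intro c hc2
    obtain ⟨a, ha, b, hb, hab⟩ := (Set.one_lt_ncard (Set.toFinite _)).mp hc2
    rw [SimpleGraph.ConnectedComponent.mem_supp_iff] at ha hb
    have hr : H.Reachable a b := SimpleGraph.ConnectedComponent.exact (ha.trans hb.symm)
    obtain ⟨w⟩ := hr
    match w with
    | SimpleGraph.Walk.nil => exact absurd rfl hab
    | SimpleGraph.Walk.cons h p =>
      refine ⟨↑a, ⟨a, ?_, rfl⟩, _, ⟨_, ?_, rfl⟩, h⟩
      · rwa [SimpleGraph.ConnectedComponent.mem_supp_iff]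
      · rw [SimpleGraph.ConnectedComponent.mem_supp_iff, ← ha]
        exact (SimpleGraph.ConnectedComponent.sound h.reachable).symm
  have hedgeA : ∃ a ∈ A, ∃ b ∈ A, G.Adj a b := hedge c₁ (hsupp2 c₁)
  have hedgeB : ∃ a ∈ B, ∃ b ∈ B, G.Adj a b := hedge c₂ (hsupp2 c₂)
  -- the two sides
  set T₁ : Set V := A ∪ {x, y} with hT₁
  set T₂ : Set V := B ∪ {x, y} with hT₂
  have hxT₁ : x ∈ T₁ := Or.inr (Or.inl rfl)
  have hyT₁ : y ∈ T₁ := Or.inr (Or.inr rfl)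
  have hxT₂ : x ∈ T₂ := Or.inr (Or.inl rfl)
  have hyT₂ : y ∈ T₂ := Or.inr (Or.inr rfl)
  obtain ⟨n₁, G₁, z₁, xx₁, yy₁, f₁, hne₁, hdeg₁, hinj₁, hfx₁, hfy₁, himg₁, htr₁, hnadj₁, hcard₁⟩ :=
    side G x y hxy hadj T₁ hxT₁ hyT₁
  obtain ⟨n₂, G₂, z₂, xx₂, yy₂, f₂, hne₂, hdeg₂, hinj₂, hfx₂, hfy₂, himg₂, htr₂, hnadj₂, hcard₂⟩ :=
    side G x y hxy hadj T₂ hxT₂ hyT₂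
  -- edge-count lower bounds
  have hcount : ∀ (T : Set V) (C : Set V), (∀ v ∈ C, v ∉ T) → x ∉ C → y ∉ C →
      (∃ a ∈ C, G.Adj x a) → (∃ a ∈ C, G.Adj y a) → (∃ a ∈ C, ∃ b ∈ C, G.Adj a b) →
      {e ∈ G.edgeSet | ∀ v ∈ e, v ∈ T}.ncard + 3 ≤ G.edgeSet.ncard := by
    intro T C hCT hxC hyC hb1 hb2 hb34'
    obtain ⟨b₁, hb₁, hxb₁⟩ := hb1
    obtain ⟨b₂, hb₂, hyb₂⟩ := hb2
    obtain ⟨b₃, hb₃, b₄, hb₄, hb34⟩ := hb34'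
    set ET := {e ∈ G.edgeSet | ∀ v ∈ e, v ∈ T} with hETdef
    set F : Set (Sym2 V) := {s(x, b₁), s(y, b₂), s(b₃, b₄)} with hF
    have hd12 : s(x, b₁) ≠ s(y, b₂) := by
      intro h
      rcases Sym2.eq_iff.mp h with ⟨h', _⟩ | ⟨h', _⟩
      · exact hxy h'
      · exact hxC (h' ▸ hb₂)
    have hd13 : s(x, b₁) ≠ s(b₃, b₄) := by
      intro h
      rcases Sym2.eq_iff.mp h with ⟨h', _⟩ | ⟨h', _⟩
      · exact hxC (h' ▸ hb₃)
      · exact hxC (h' ▸ hb₄)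
    have hd23 : s(y, b₂) ≠ s(b₃, b₄) := by
      intro h
      rcases Sym2.eq_iff.mp h with ⟨h', _⟩ | ⟨h', _⟩
      · exact hyC (h' ▸ hb₃)
      · exact hyC (h' ▸ hb₄)
    have hFnotET : ∀ e ∈ F, e ∉ ET := by
      intro e he hET'
      rcases he with rfl | rfl | rfl
      · exact hCT b₁ hb₁ (hET'.2 b₁ (by simp))
      · exact hCT b₂ hb₂ (hET'.2 b₂ (by simp))
      · exact hCT b₃ hb₃ (hET'.2 b₃ (by simp))
    have hdisj : Disjoint ET F := by
      rw [Set.disjoint_right]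
      exact fun {e} he he' => hFnotET e he he'
    have hF3 : F.ncard = 3 := by
      rw [hF]
      rw [Set.ncard_insert_of_notMem (by simp [hd12, hd13]) (Set.toFinite _),
        Set.ncard_pair hd23]
    have hsub : ET ∪ F ⊆ G.edgeSet := by
      intro e he
      rcases he with he | he
      · exact he.1
      · rcases he with rfl | rfl | rfl
        · exact hxb₁
        · exact hyb₂
        · exact hb34
    have := Set.ncard_le_ncard hsub (Set.toFinite _)
    rwa [Set.ncard_union_eq hdisj (Set.toFinite _) (Set.toFinite _), hF3] at this
  have hmemT₁ : ∀ v, v ∈ A ∨ v = x ∨ v = y → v ∈ T₁ := by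
    rintro v (h | h | h)
    · exact Or.inl h
    · exact h ▸ hxT₁
    · exact h ▸ hyT₁
  have hmemT₂ : ∀ v, v ∈ B ∨ v = x ∨ v = y → v ∈ T₂ := by
    rintro v (h | h | h)
    · exact Or.inl h
    · exact h ▸ hxT₂
    · exact h ▸ hyT₂
  have hBT₁ : ∀ v ∈ B, v ∉ T₁ := by
    rintro v hv (h | h | h)
    · exact hABdisj v h hv
    · exact hxB (h ▸ hv)
    · exact hyB (h ▸ hv)
  have hAT₂ : ∀ v ∈ A, v ∉ T₂ := by
    rintro v hv (h | h | h)
    · exact hABdisj v hv h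
    · exact hxA (h ▸ hv)
    · exact hyA (h ▸ hv)
  have hbound₁ : {e ∈ G.edgeSet | ∀ v ∈ e, v ∈ T₁}.ncard + 3 ≤ G.edgeSet.ncard :=
    hcount T₁ B hBT₁ hxB hyB hnbxB hnbyB hedgeB
  have hbound₂ : {e ∈ G.edgeSet | ∀ v ∈ e, v ∈ T₂}.ncard + 3 ≤ G.edgeSet.ncard :=
    hcount T₂ A hAT₂ hxA hyA hnbxA hnbyA hedgeA
  refine ⟨n₁, n₂, G₁, G₂,
    ⟨z₁, xx₁, yy₁, z₂, xx₂, yy₂, f₁, f₂, hne₁, hne₂, hdeg₁, hdeg₂, hinj₁, hinj₂,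
      hfx₁, hfy₁, hfx₂, hfy₂, ?_, ?_, ?_, ?_, ?_, ?_⟩, by omega, by omega⟩
  · -- cover
    intro v
    rw [Set.mem_union, himg₁, himg₂]
    rcases hpart v with h | h | h | h
    · exact Or.inl (hmemT₁ v (Or.inl h))
    · exact Or.inr (hmemT₂ v (Or.inl h))
    · exact Or.inl (hmemT₁ v (Or.inr (Or.inl h)))
    · exact Or.inl (hmemT₁ v (Or.inr (Or.inr h)))
  · -- intersection
    rw [himg₁, himg₂]
    ext v
    constructor
    · rintro ⟨h1, h2⟩
      rcases h1 with h1 | h1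
      · rcases h2 with h2 | h2
        · exact absurd h2 (fun h2 => hABdisj v h1 h2)
        · exact h2
      · exact h1
    · rintro (rfl | rfl)
      · exact ⟨hxT₁, hxT₂⟩
      · exact ⟨hyT₁, hyT₂⟩
  · exact fun u v hu hv _ => htr₁ u v hu hv
  · exact fun u v hu hv _ => htr₂ u v hu hv
  · exact iff_of_false hadj (by rintro (h | h); exacts [hnadj₁ h, hnadj₂ h])
  · -- every edge is on one side
    intro a b hGab
    rw [himg₁, himg₂]
    rcases hpart a with ha | ha | rfl | rfl
    · rcases hclA a ha b hGab with hb | rfl | rfl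
      · exact Or.inl ⟨Or.inl ha, Or.inl hb⟩
      · exact Or.inl ⟨Or.inl ha, hxT₁⟩
      · exact Or.inl ⟨Or.inl ha, hyT₁⟩
    · rcases hclB a ha b hGab with hb | rfl | rfl
      · exact Or.inr ⟨Or.inl ha, Or.inl hb⟩
      · exact Or.inr ⟨Or.inl ha, hxT₂⟩
      · exact Or.inr ⟨Or.inl ha, hyT₂⟩
    · rcases hpart b with hb | hb | rfl | rfl
      · exact Or.inl ⟨hxT₁, Or.inl hb⟩
      · exact Or.inr ⟨hxT₂, Or.inl hb⟩
      · exact Or.inl ⟨hxT₁, hxT₁⟩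
      · exact Or.inl ⟨hxT₁, hyT₁⟩
    · rcases hpart b with hb | hb | rfl | rfl
      · exact Or.inl ⟨hyT₁, Or.inl hb⟩
      · exact Or.inr ⟨hyT₂, Or.inl hb⟩
      · exact Or.inl ⟨hyT₁, hxT₁⟩
      · exact Or.inl ⟨hyT₁, hyT₁⟩
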